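/- Let g be a reversible additive graph augmentation function. Then g-WL (running WL on g(G)) is not less powerful than WL: any two graphs distinguishable by WL are also distinguishable by g-WL. In particular, the restriction to original vertices of the g-WL coloring at iteration t refines the WL coloring at iteration t on the original graph. -/

import Mathlib

/-- The type of Weisfeiler-Leman colors after `t` iterations, starting from features in `F`.
The injective hash function is modeled by pairing: a color at iteration `t+1` is the pair of
the previous color and the multiset of the previous colors of the neighbors. -/
def WLColor (F : Type*) : ℕ → Type _
  | 0 => F
  | t + 1 => WLColor F t × Multiset (WLColor F t)

/-- The WL coloring of a graph `G` with node features `X` at iteration `t`: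
`c_v^(0) = hash X_v` and `c_v^(t) = hash (c_v^(t-1), {{c_w^(t-1) | w ∈ N(v)}})`,
with the injective hash realized by pairing. -/
def wl {V F : Type*} [Fintype V] (G : SimpleGraph V) [DecidableRel G.Adj] (X : V → F) :
    (t : ℕ) → V → WLColor F t
  | 0 => X
  | t + 1 => fun v => (wl G X t v, (G.neighborFinset v).val.map (wl G X t))


variable {V₁ W₁ V₂ W₂ F F' : Type*}

/-- `g` is additive: the augmented graph (on vertex set `V ⊕ W`, the original vertices plus the
added ones) contains all original edges. -/
def AdditiveAug {V W : Type*} (G : SimpleGraph V) (G' : SimpleGraph (V ⊕ W)) : Prop :=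
  ∀ u v : V, G.Adj u v → G'.Adj (Sum.inl u) (Sum.inl v)

/-- `g` is reversible (feature part): `h` recovers the original feature on original vertices and
returns `⊥` (here `none`) on added vertices. -/
def RevFeat {V W : Type*} (X : V → F) (X' : V ⊕ W → F') (h : F' → Option F) : Prop :=
  (∀ v : V, h (X' (Sum.inl v)) = some (X v)) ∧ (∀ w : W, h (X' (Sum.inr w)) = none)

/-- `g` is reversible (edge part): for every edge of the augmented graph, `ε` applied to the
endpoint features tells whether it is an original edge. -/
def RevEdge {V W : Type*} (G : SimpleGraph V) (G' : SimpleGraph (V ⊕ W)) (X' : V ⊕ W → F')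
    (ε : F' → F' → Bool) : Prop :=
  ∀ a b : V ⊕ W, G'.Adj a b →
    (ε (X' a) (X' b) = true ↔ ∃ u v : V, a = Sum.inl u ∧ b = Sum.inl v ∧ G.Adj u v)

section Aux

/-- Extract the base (iteration-0) feature from a WL color. -/
def wlBase (F' : Type*) : (t : ℕ) → WLColor F' t → F'
  | 0, c => c
  | t + 1, c => wlBase F' t c.1

theorem wlBase_wl {V F' : Type*} [Fintype V] (G : SimpleGraph V) [DecidableRel G.Adj]
    (X : V → F') : ∀ (t : ℕ) (v : V), wlBase F' t (wl G X t v) = X v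
  | 0, _ => rfl
  | t + 1, v => wlBase_wl G X t v

/-- The decoding function on colors. -/
def wlDec {F F' : Type*} (hdec : F' → Option F) (ε : F' → F' → Bool) :
    (t : ℕ) → WLColor F' t → Option (WLColor F t)
  | 0, c => hdec c
  | t + 1, c =>
    (wlDec hdec ε t c.1).map fun c₀ =>
      (c₀, c.2.filterMap fun d =>
        if ε (wlBase F' t c.1) (wlBase F' t d) then wlDec hdec ε t d else none)

theorem Multiset.filterMap_add' {α β : Type*} (f : α → Option β) (s t : Multiset α) :
    (s + t).filterMap f = s.filterMap f + t.filterMap f := by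
  induction s using Multiset.induction with
  | empty => simp
  | cons a s ih =>
    rcases h : f a with _ | b
    · rw [Multiset.cons_add, Multiset.filterMap_cons_none _ _ h,
        Multiset.filterMap_cons_none _ _ h, ih]
    · rw [Multiset.cons_add, Multiset.filterMap_cons_some _ _ _ h,
        Multiset.filterMap_cons_some _ _ _ h, ih, Multiset.cons_add]

theorem Multiset.filterMap_eq_zero' {α β : Type*} {f : α → Option β} {s : Multiset α}
    (h : ∀ a ∈ s, f a = none) : s.filterMap f = 0 := by
  induction s using Multiset.induction with
  | empty => simp
  | cons a s ih =>
    rw [Multiset.filterMap_cons_none _ _ (h a (Multiset.mem_cons_self a s))]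
    exact ih fun a ha => h a (Multiset.mem_cons_of_mem ha)

theorem Multiset.filterMap_eq_map' {α β : Type*} {f : α → Option β} {g : α → β}
    {s : Multiset α} (h : ∀ a ∈ s, f a = some (g a)) : s.filterMap f = s.map g := by
  induction s using Multiset.induction with
  | empty => simp
  | cons a s ih =>
    rw [Multiset.filterMap_cons_some _ _ _ (h a (Multiset.mem_cons_self a s)),
      Multiset.map_cons, ih fun a ha => h a (Multiset.mem_cons_of_mem ha)]

/-- filterMap only depends on the "support" sub-multiset, for nodup multisets. -/
theorem Multiset.filterMap_support {α β : Type*} {f : α → Option β} {s t : Multiset α}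
    (hle : t ≤ s) (hnd : s.Nodup) (h : ∀ a ∈ s, a ∉ t → f a = none) :
    s.filterMap f = t.filterMap f := by
  obtain ⟨u, rfl⟩ := Multiset.le_iff_exists_add.mp hle
  have hu : u.filterMap f = 0 := by
    refine Multiset.filterMap_eq_zero' fun a ha => ?_
    refine h a (Multiset.mem_add.mpr (Or.inr ha)) fun hat => ?_
    exact Multiset.disjoint_left.mp (Multiset.nodup_add.mp hnd).2.2 hat ha
  rw [Multiset.filterMap_add', hu, add_zero]

/-- The key single-graph lemma: the decoding commutes with WL on augmented graphs. -/
theorem wlDec_correct {V W F F' : Type*} [Fintype V] [Fintype W]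
    (G : SimpleGraph V) [DecidableRel G.Adj] (X : V → F)
    (G' : SimpleGraph (V ⊕ W)) [DecidableRel G'.Adj] (X' : V ⊕ W → F')
    (hdec : F' → Option F) (ε : F' → F' → Bool)
    (hadd : AdditiveAug G G') (hrf : RevFeat X X' hdec) (hre : RevEdge G G' X' ε) :
    ∀ t : ℕ,
      (∀ v : V, wlDec hdec ε t (wl G' X' t (Sum.inl v)) = some (wl G X t v)) ∧
      (∀ w : W, wlDec hdec ε t (wl G' X' t (Sum.inr w)) = none) := by
  intro t
  induction t with
  | zero => exact ⟨hrf.1, hrf.2⟩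
  | succ t ih =>
    obtain ⟨ih1, ih2⟩ := ih
    constructor
    · intro v
      have hmain : Multiset.filterMap
          (fun d => if ε (wlBase F' t (wl G' X' t (Sum.inl v))) (wlBase F' t d) = true
            then wlDec hdec ε t d else none)
          (((G'.neighborFinset (Sum.inl v)).val).map (wl G' X' t)) =
          (G.neighborFinset v).val.map (wl G X t) := ?_
      · show (wlDec hdec ε t (wl G' X' t (Sum.inl v))).map _ = _
        rw [ih1 v]
        exact congrArg some (Prod.ext rfl hmain)
      rw [Multiset.filterMap_map]
      have hsub : ((G.neighborFinset v).val.map Sum.inl : Multiset (V ⊕ W)) ≤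
          (G'.neighborFinset (Sum.inl v)).val := by
        rw [Multiset.le_iff_subset
          ((G.neighborFinset v).nodup.map Sum.inl_injective)]
        intro a ha
        obtain ⟨u, hu, rfl⟩ := Multiset.mem_map.mp ha
        rw [← Finset.mem_def, SimpleGraph.mem_neighborFinset] at hu ⊢
        exact hadd v u hu
      rw [Multiset.filterMap_support hsub ((G'.neighborFinset (Sum.inl v)).nodup),
        Multiset.filterMap_map]
      · refine Multiset.filterMap_eq_map' fun u hu => ?_
        rw [← Finset.mem_def, SimpleGraph.mem_neighborFinset] at hu
        have hadj : G'.Adj (Sum.inl v) (Sum.inl u) := hadd v u hu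
        simp only [Function.comp_apply, wlBase_wl]
        rw [if_pos, ih1 u]
        exact (hre _ _ hadj).mpr ⟨v, u, rfl, rfl, hu⟩
      · intro a ha hna
        rw [← Finset.mem_def, SimpleGraph.mem_neighborFinset] at ha
        simp only [Function.comp_apply, wlBase_wl]
        rw [if_neg]
        intro hε
        obtain ⟨u', u, hu', hu, hadj⟩ := (hre _ _ ha).mp hε
        obtain rfl : v = u' := Sum.inl.inj hu'
        exact hna <| hu ▸ Multiset.mem_map_of_mem _
          (by rw [← Finset.mem_def, SimpleGraph.mem_neighborFinset]; exact hadj)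
    · intro w
      show (wlDec hdec ε t (wl G' X' t (Sum.inr w))).map _ = _
      rw [ih2 w]
      rfl

/-- Decoding the global color multiset recovers the original one. -/
theorem wlDec_multiset {V W F F' : Type*} [Fintype V] [Fintype W]
    (G : SimpleGraph V) [DecidableRel G.Adj] (X : V → F)
    (G' : SimpleGraph (V ⊕ W)) [DecidableRel G'.Adj] (X' : V ⊕ W → F')
    (hdec : F' → Option F) (ε : F' → F' → Bool)
    (hadd : AdditiveAug G G') (hrf : RevFeat X X' hdec) (hre : RevEdge G G' X' ε) (t : ℕ) :
    ((Finset.univ.val.map (wl G' X' t)).filterMap (wlDec hdec ε t)) =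
      Finset.univ.val.map (wl G X t) := by
  obtain ⟨h1, h2⟩ := wlDec_correct G X G' X' hdec ε hadd hrf hre t
  rw [Multiset.filterMap_map, ← Finset.univ_disjSum_univ, Finset.val_disjSum,
    Multiset.disjSum, Multiset.filterMap_add', Multiset.filterMap_map, Multiset.filterMap_map]
  rw [Multiset.filterMap_eq_map' (f := (wlDec hdec ε t ∘ wl G' X' t) ∘ Sum.inl)
      (g := wl G X t) (fun v _ => h1 v),
    Multiset.filterMap_eq_zero' (f := (wlDec hdec ε t ∘ wl G' X' t) ∘ Sum.inr)
      (fun w _ => h2 w), add_zero]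

end Aux

/-- Let `g` be a reversible additive graph augmentation (here given by its action on two graphs,
with the same decoding functions `hdec`, `ε`).  Then `g`-WL is not less powerful than WL:
the restriction to original vertices of the `g`-WL coloring at iteration `t` refines the WL
coloring at iteration `t` on the original graph (uniformly for both graphs, and with added
vertices recognizable); consequently, if WL distinguishes the two graphs then `g`-WL does. -/
theorem reversible_augmentation_not_less_powerful
    [Fintype V₁] [Fintype W₁] [Fintype V₂] [Fintype W₂]
    (G₁ : SimpleGraph V₁) [DecidableRel G₁.Adj] (X₁ : V₁ → F)
    (G₂ : SimpleGraph V₂) [DecidableRel G₂.Adj] (X₂ : V₂ → F)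
    (G₁' : SimpleGraph (V₁ ⊕ W₁)) [DecidableRel G₁'.Adj] (X₁' : V₁ ⊕ W₁ → F')
    (G₂' : SimpleGraph (V₂ ⊕ W₂)) [DecidableRel G₂'.Adj] (X₂' : V₂ ⊕ W₂ → F')
    (hdec : F' → Option F) (ε : F' → F' → Bool)
    (hadd₁ : AdditiveAug G₁ G₁') (hadd₂ : AdditiveAug G₂ G₂')
    (hrf₁ : RevFeat X₁ X₁' hdec) (hrf₂ : RevFeat X₂ X₂' hdec)
    (hre₁ : RevEdge G₁ G₁' X₁' ε) (hre₂ : RevEdge G₂ G₂' X₂' ε) :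
    (∀ t : ℕ, ∃ h : WLColor F' t → Option (WLColor F t),
      (∀ v : V₁, h (wl G₁' X₁' t (Sum.inl v)) = some (wl G₁ X₁ t v)) ∧
      (∀ w : W₁, h (wl G₁' X₁' t (Sum.inr w)) = none) ∧
      (∀ v : V₂, h (wl G₂' X₂' t (Sum.inl v)) = some (wl G₂ X₂ t v)) ∧
      (∀ w : W₂, h (wl G₂' X₂' t (Sum.inr w)) = none)) ∧
    ((∃ t : ℕ, (Finset.univ.val.map (wl G₁ X₁ t)) ≠ (Finset.univ.val.map (wl G₂ X₂ t))) →
      ∃ t : ℕ, (Finset.univ.val.map (wl G₁' X₁' t)) ≠ (Finset.univ.val.map (wl G₂' X₂' t))) := by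
  constructor
  · intro t
    obtain ⟨h11, h12⟩ := wlDec_correct G₁ X₁ G₁' X₁' hdec ε hadd₁ hrf₁ hre₁ t
    obtain ⟨h21, h22⟩ := wlDec_correct G₂ X₂ G₂' X₂' hdec ε hadd₂ hrf₂ hre₂ t
    exact ⟨wlDec hdec ε t, h11, h12, h21, h22⟩
  · rintro ⟨t, hne⟩
    refine ⟨t, fun heq => hne ?_⟩
    rw [← wlDec_multiset G₁ X₁ G₁' X₁' hdec ε hadd₁ hrf₁ hre₁ t,
      ← wlDec_multiset G₂ X₂ G₂' X₂' hdec ε hadd₂ hrf₂ hre₂ t, heq]
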